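/- For every n ≥ 1, n · det C₀⁽ⁿ⁾ = det C₁⁽ⁿ⁻¹⁾, where C₀⁽ⁿ⁾ is the n×n matrix with entries (i+j)!/(i! j!) for i,j = 0,…,n-1, and C₁⁽ⁿ⁻¹⁾ is the (n-1)×(n-1) matrix with entries (i+j)!/(i! j!) for i,j = 1,…,n-1 (with the convention that the empty determinant for n = 1 equals 1). -/
import Mathlib

open Matrix

private theorem vandN_aux (i j N : ℕ) (h : i < N) :
    ∑ k ∈ Finset.range N, i.choose k * j.choose k = (i + j).choose i := by
  have h1 : ∑ k ∈ Finset.range N, i.choose k * j.choose k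
      = ∑ k ∈ Finset.range (i + 1), i.choose k * j.choose k := by
    refine (Finset.sum_subset ?_ ?_).symm
    · intro k hk; simp only [Finset.mem_range] at *; omega
    · intro k _ hk
      simp only [Finset.mem_range, Nat.lt_succ] at hk
      rw [Nat.choose_eq_zero_of_lt (by omega), Nat.zero_mul]
  have h2 : ∑ k ∈ Finset.range (i + 1), i.choose ((i + 1) - 1 - k) * j.choose (i - ((i+1) - 1 - k))
      = ∑ k ∈ Finset.range (i + 1), i.choose k * j.choose (i - k) :=
    Finset.sum_range_reflect (fun k => i.choose k * j.choose (i - k)) (i + 1)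
  have h3 : ∑ k ∈ Finset.range (i + 1), i.choose k * j.choose k
      = ∑ k ∈ Finset.range (i + 1), i.choose ((i + 1) - 1 - k) * j.choose (i - ((i+1) - 1 - k)) := by
    refine Finset.sum_congr rfl fun k hk => ?_
    simp only [Finset.mem_range, Nat.lt_succ] at hk
    have e1 : (i + 1) - 1 - k = i - k := by omega
    have e2 : i - (i - k) = k := by omega
    rw [e1, Nat.choose_symm (by omega), e2]
  rw [h1, h3, h2, Nat.add_choose_eq, Finset.Nat.sum_antidiagonal_eq_sum_range_succ
    (fun a b => i.choose a * j.choose b)]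

private theorem vandQ_aux (i j N : ℕ) (h : i < N) :
    ∑ k ∈ Finset.range N, (i.choose k : ℚ) * (j.choose k : ℚ) = ((i + j).choose i : ℚ) := by
  exact_mod_cast congrArg (Nat.cast : ℕ → ℚ) (vandN_aux i j N h)

private theorem altQ_aux (i N : ℕ) (h : i < N) :
    ∑ k ∈ Finset.range N, (-1 : ℚ) ^ k * ((i + 1).choose (k + 1) : ℚ) = 1 := by
  have h1 : ∑ k ∈ Finset.range N, (-1 : ℚ) ^ k * ((i + 1).choose (k + 1) : ℚ)
      = ∑ k ∈ Finset.range (i + 1), (-1 : ℚ) ^ k * ((i + 1).choose (k + 1) : ℚ) := by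
    refine (Finset.sum_subset ?_ ?_).symm
    · intro k hk; simp only [Finset.mem_range] at *; omega
    · intro k _ hk
      simp only [Finset.mem_range, Nat.lt_succ] at hk
      rw [Nat.choose_eq_zero_of_lt (by omega)]
      simp
  have h0 : ∑ k ∈ Finset.range (i + 2), (-1 : ℚ) ^ k * ((i + 1).choose k : ℚ) = 0 := by
    have := Int.alternating_sum_range_choose (n := i + 1)
    simp only [Nat.add_one_ne_zero, if_false] at this
    have h' : ((∑ m ∈ Finset.range (i + 1 + 1), (-1 : ℤ) ^ m * ((i + 1).choose m) : ℤ) : ℚ) = 0 := by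
      rw [this]; norm_num
    push_cast at h'
    convert h' using 2
  have h2 := Finset.sum_range_succ' (fun k => (-1 : ℚ) ^ k * ((i + 1).choose k : ℚ)) (i + 1)
  rw [h0] at h2
  simp only [pow_zero, Nat.choose_zero_right, Nat.cast_one, mul_one, pow_succ] at h2
  rw [h1]
  have h3 : ∑ k ∈ Finset.range (i + 1), (-1 : ℚ) ^ k * ((i + 1).choose (k + 1) : ℚ)
      = - ∑ k ∈ Finset.range (i + 1), (-1 : ℚ) ^ k * (-1) * ((i + 1).choose (k + 1) : ℚ) := by
    rw [← Finset.sum_neg_distrib]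
    exact Finset.sum_congr rfl fun k _ => by ring
  rw [h3]
  linarith [h2]

theorem stmt_8 (n : ℕ) (hn : 1 ≤ n) :
    (n : ℚ) * Matrix.det (Matrix.of fun i j : Fin n =>
        ((Nat.choose ((i : ℕ) + (j : ℕ)) (i : ℕ) : ℚ))) =
      Matrix.det (Matrix.of fun i j : Fin (n - 1) =>
        ((Nat.choose (((i : ℕ) + 1) + ((j : ℕ) + 1)) ((i : ℕ) + 1) : ℚ))) := by
  obtain ⟨m, rfl⟩ : ∃ m, n = m + 1 := ⟨n - 1, (Nat.succ_pred_eq_of_pos hn).symm⟩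
  show ((m + 1 : ℕ) : ℚ) * Matrix.det (Matrix.of fun i j : Fin (m + 1) =>
        ((Nat.choose ((i : ℕ) + (j : ℕ)) (i : ℕ) : ℚ))) =
      Matrix.det (Matrix.of fun i j : Fin m =>
        ((Nat.choose (((i : ℕ) + 1) + ((j : ℕ) + 1)) ((i : ℕ) + 1) : ℚ)))
  -- Part 1 : the big determinant is 1
  set L : Matrix (Fin (m + 1)) (Fin (m + 1)) ℚ :=
    Matrix.of (fun i k : Fin (m + 1) => ((i : ℕ).choose (k : ℕ) : ℚ)) with hLdef
  have hLtri : L.BlockTriangular OrderDual.toDual := by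
    intro p q hpq
    have : (p : ℕ) < (q : ℕ) := hpq
    simp [hLdef, Nat.choose_eq_zero_of_lt this]
  have hLdet : L.det = 1 := by
    rw [Matrix.det_of_lowerTriangular L hLtri]
    simp [hLdef]
  have hC0 : (Matrix.of fun i j : Fin (m + 1) =>
      ((Nat.choose ((i : ℕ) + (j : ℕ)) (i : ℕ) : ℚ))) = L * Lᵀ := by
    ext i j
    rw [Matrix.mul_apply]
    simp only [Matrix.of_apply, Matrix.transpose_apply, hLdef]
    rw [Fin.sum_univ_eq_sum_range (fun k => (((i : ℕ).choose k : ℚ)) * (((j : ℕ).choose k : ℚ))) (m + 1)]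
    exact (vandQ_aux i j (m + 1) i.isLt).symm
  have hdet0 : Matrix.det (Matrix.of fun i j : Fin (m + 1) =>
      ((Nat.choose ((i : ℕ) + (j : ℕ)) (i : ℕ) : ℚ))) = 1 := by
    rw [hC0, Matrix.det_mul, Matrix.det_transpose, hLdet, mul_one]
  -- Part 2 : the small determinant is m + 1
  set B : Matrix (Fin m) (Fin m) ℚ :=
    Matrix.of (fun i k : Fin m => (((i : ℕ) + 1).choose ((k : ℕ) + 1) : ℚ)) with hBdef
  set u : Fin m → ℚ := fun k => (-1 : ℚ) ^ (k : ℕ) with hudef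
  have hBtri : B.BlockTriangular OrderDual.toDual := by
    intro p q hpq
    have : (p : ℕ) < (q : ℕ) := hpq
    simp [hBdef, Nat.choose_eq_zero_of_lt (by omega : (p : ℕ) + 1 < (q : ℕ) + 1)]
  have hBdet : B.det = 1 := by
    rw [Matrix.det_of_lowerTriangular B hBtri]
    simp [hBdef]
  have hs : ∀ i : Fin m, ∑ k : Fin m, B i k * u k = 1 := by
    intro i
    have := altQ_aux (i : ℕ) m i.isLt
    simp only [hBdef, hudef, Matrix.of_apply]
    rw [Fin.sum_univ_eq_sum_range
      (fun k => ((((i : ℕ) + 1).choose (k + 1) : ℚ)) * ((-1 : ℚ) ^ k)) m]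
    rw [show ∑ k ∈ Finset.range m, ((((i : ℕ) + 1).choose (k + 1) : ℚ)) * ((-1 : ℚ) ^ k)
        = ∑ k ∈ Finset.range m, (-1 : ℚ) ^ k * ((((i : ℕ) + 1).choose (k + 1) : ℚ)) from
      Finset.sum_congr rfl fun k _ => mul_comm _ _, this]
  set X : Matrix (Fin m) (Fin m) ℚ := Matrix.of (fun k l : Fin m => u k * u l) with hXdef
  have hX : X = Matrix.replicateCol Unit u * Matrix.replicateRow Unit u := by
    ext k l
    simp [hXdef, Matrix.mul_apply]
  have hBX : B * X = Matrix.of (fun i l : Fin m => u l) := by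
    ext i l
    rw [Matrix.mul_apply]
    simp only [Matrix.of_apply, hXdef]
    have e : ∑ k : Fin m, B i k * (u k * u l) = (∑ k : Fin m, B i k * u k) * u l := by
      rw [Finset.sum_mul]
      exact Finset.sum_congr rfl fun k _ => by ring
    rw [e, hs i, one_mul]
  have hC1 : (Matrix.of fun i j : Fin m =>
      ((Nat.choose (((i : ℕ) + 1) + ((j : ℕ) + 1)) ((i : ℕ) + 1) : ℚ)))
      = B * (1 + Matrix.replicateCol Unit u * Matrix.replicateRow Unit u) * Bᵀ := by
    rw [Matrix.mul_add, Matrix.mul_one, Matrix.add_mul, ← hX, hBX]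
    ext i j
    simp only [Matrix.add_apply, Matrix.of_apply]
    have e2 : (Matrix.of (fun i l : Fin m => u l) * Bᵀ) i j = 1 := by
      rw [Matrix.mul_apply]
      simp only [Matrix.of_apply, Matrix.transpose_apply]
      rw [show (∑ l : Fin m, u l * B j l) = ∑ l : Fin m, B j l * u l from
        Finset.sum_congr rfl fun l _ => mul_comm _ _, hs j]
    have e1 : (B * Bᵀ) i j
        = ((Nat.choose (((i : ℕ) + 1) + ((j : ℕ) + 1)) ((i : ℕ) + 1) : ℚ)) - 1 := by
      rw [Matrix.mul_apply]
      simp only [Matrix.of_apply, Matrix.transpose_apply, hBdef]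
      rw [Fin.sum_univ_eq_sum_range
        (fun k => ((((i : ℕ) + 1).choose (k + 1) : ℚ)) * ((((j : ℕ) + 1).choose (k + 1) : ℚ))) m]
      have hv := vandQ_aux ((i : ℕ) + 1) ((j : ℕ) + 1) (m + 1) (by omega)
      have hsp := Finset.sum_range_succ'
        (fun k => ((((i : ℕ) + 1).choose k : ℚ)) * ((((j : ℕ) + 1).choose k : ℚ))) m
      rw [hv] at hsp
      simp only [Nat.choose_zero_right, Nat.cast_one, mul_one] at hsp
      linarith [hsp]
    rw [e1, e2]
    ring
  have hdet1 : Matrix.det (Matrix.of fun i j : Fin m =>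
      ((Nat.choose (((i : ℕ) + 1) + ((j : ℕ) + 1)) ((i : ℕ) + 1) : ℚ))) = (m : ℚ) + 1 := by
    rw [hC1, Matrix.det_mul, Matrix.det_mul, Matrix.det_transpose, hBdet,
      Matrix.det_one_add_replicateCol_mul_replicateRow]
    have : u ⬝ᵥ u = (m : ℚ) := by
      simp only [dotProduct, hudef, ← pow_add]
      have : ∀ k : Fin m, ((-1 : ℚ)) ^ ((k : ℕ) + (k : ℕ)) = 1 := fun k => by
        rw [← two_mul, pow_mul]; norm_num
      rw [Finset.sum_congr rfl fun k _ => this k]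
      simp
    rw [this]
    ring
  rw [hdet0, hdet1]
  push_cast
  ring
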